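/- Let R be an algebraic curvature tensor on ℝⁿ and u, v ∈ ℝⁿ. Then R(u, v, v, u) = R(u − v, v, v, u − v); moreover, if |u| ≤ 1 and |v| ≤ 1, then R(u,v,v,u)/|u−v| ≤ 2·sup over orthonormal pairs (x,y) of |R(x,y,y,x)| (when u ≠ v). -/

import Mathlib

open scoped InnerProductSpace

/-- An algebraic curvature tensor on a real vector space: a 4-linear map (linearity is
required in the first slot; together with the symmetries this gives full multilinearity)
which is antisymmetric in the first two and in the last two slots and symmetric under
exchange of the two pairs. -/
structure CurvTensor (E : Type*) [AddCommGroup E] [Module ℝ E] where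
  R : E → E → E → E → ℝ
  add_left : ∀ x x' y z w, R (x + x') y z w = R x y z w + R x' y z w
  smul_left : ∀ (c : ℝ) x y z w, R (c • x) y z w = c * R x y z w
  antisym_fst : ∀ x y z w, R x y z w = -R y x z w
  antisym_snd : ∀ x y z w, R x y z w = -R x y w z
  pair_symm : ∀ x y z w, R x y z w = R z w x y

namespace CurvTensor
variable {E : Type*} [AddCommGroup E] [Module ℝ E] (T : CurvTensor E)

lemma zero_left (y z w : E) : T.R 0 y z w = 0 := by
  have := T.smul_left 0 0 y z w
  simpa using this

lemma add_snd (x y y' z w : E) : T.R x (y + y') z w = T.R x y z w + T.R x y' z w := by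
  rw [T.antisym_fst, T.add_left, T.antisym_fst x y, T.antisym_fst x y']; ring

lemma smul_snd (c : ℝ) (x y z w : E) : T.R x (c • y) z w = c * T.R x y z w := by
  rw [T.antisym_fst, T.smul_left, T.antisym_fst x y]; ring

lemma add_thd (x y z z' w : E) : T.R x y (z + z') w = T.R x y z w + T.R x y z' w := by
  rw [T.pair_symm, T.add_left, T.pair_symm z, T.pair_symm z']

lemma smul_thd (c : ℝ) (x y z w : E) : T.R x y (c • z) w = c * T.R x y z w := by
  rw [T.pair_symm, T.smul_left, T.pair_symm z]

lemma add_fth (x y z w w' : E) : T.R x y z (w + w') = T.R x y z w + T.R x y z w' := by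
  rw [T.pair_symm, T.add_snd, T.pair_symm x y z w, T.pair_symm x y z w']

lemma smul_fth (c : ℝ) (x y z w : E) : T.R x y z (c • w) = c * T.R x y z w := by
  rw [T.pair_symm, T.smul_snd, T.pair_symm x y z w]

lemma diag_fst (x z w : E) : T.R x x z w = 0 := by
  have := T.antisym_fst x x z w; linarith

lemma diag_snd (x y z : E) : T.R x y z z = 0 := by
  have := T.antisym_snd x y z z; linarith

lemma sub_left (x x' y z w : E) : T.R (x - x') y z w = T.R x y z w - T.R x' y z w := by
  rw [sub_eq_add_neg, T.add_left, ← neg_one_smul ℝ x', T.smul_left]; ring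

lemma sub_fth (x y z w w' : E) : T.R x y z (w - w') = T.R x y z w - T.R x y z w' := by
  rw [sub_eq_add_neg, T.add_fth, ← neg_one_smul ℝ w', T.smul_fth]; ring

lemma zero_snd (x z w : E) : T.R x 0 z w = 0 := by
  have := T.smul_snd 0 x 0 z w; simpa using this

lemma diag_move (w b : E) (α : ℝ) : T.R w (b + α • w) (b + α • w) w = T.R w b b w := by
  rw [T.add_snd, T.add_thd, T.add_thd, T.smul_snd, T.smul_thd, T.smul_thd,
    T.diag_snd, T.diag_snd]
  have h1 : T.R w w b w = 0 := T.diag_fst w b w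
  rw [h1]; ring

lemma sum_left {ι : Type*} (s : Finset ι) (f : ι → E) (y z w : E) :
    T.R (∑ i ∈ s, f i) y z w = ∑ i ∈ s, T.R (f i) y z w := by
  induction s using Finset.cons_induction with
  | empty => simpa using T.zero_left y z w
  | cons a s ha ih => rw [Finset.sum_cons, Finset.sum_cons, T.add_left, ih]

lemma sum_snd {ι : Type*} (s : Finset ι) (x : E) (f : ι → E) (z w : E) :
    T.R x (∑ i ∈ s, f i) z w = ∑ i ∈ s, T.R x (f i) z w := by
  induction s using Finset.cons_induction with
  | empty => simpa using T.zero_snd x z w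
  | cons a s ha ih => rw [Finset.sum_cons, Finset.sum_cons, T.add_snd, ih]

lemma sum_thd {ι : Type*} (s : Finset ι) (x y : E) (f : ι → E) (w : E) :
    T.R x y (∑ i ∈ s, f i) w = ∑ i ∈ s, T.R x y (f i) w := by
  rw [T.pair_symm, T.sum_left]
  exact Finset.sum_congr rfl fun i _ => (T.pair_symm x y (f i) w).symm

lemma sum_fth {ι : Type*} (s : Finset ι) (x y z : E) (f : ι → E) :
    T.R x y z (∑ i ∈ s, f i) = ∑ i ∈ s, T.R x y z (f i) := by
  rw [T.pair_symm, T.sum_snd]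
  exact Finset.sum_congr rfl fun i _ => (T.pair_symm x y z (f i)).symm

end CurvTensor

section Euclid
variable {n : ℕ}

private lemma eucl_repr (a : EuclideanSpace ℝ (Fin n)) :
    a = ∑ i, a i • EuclideanSpace.single i (1:ℝ) := by
  ext j
  rw [show ((∑ i, a i • EuclideanSpace.single i (1:ℝ)) j)
      = ∑ i, (a i • EuclideanSpace.single i (1:ℝ)) j from by rw [WithLp.ofLp_sum]; exact Finset.sum_apply j Finset.univ _]
  simp [EuclideanSpace.single_apply]

private lemma eucl_coord (a : EuclideanSpace ℝ (Fin n)) (i : Fin n) : |a i| ≤ ‖a‖ := by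
  have h := EuclideanSpace.norm_eq a
  rw [h, Real.le_sqrt (abs_nonneg _)]
  · have : ‖a i‖^2 ≤ ∑ j, ‖a j‖^2 :=
      Finset.single_le_sum (f := fun j => ‖a j‖^2) (fun _ _ => sq_nonneg _) (Finset.mem_univ i)
    simpa using this
  · positivity

/-- key bound: the tensor on unit vectors is bounded by the sum of basis values -/
private lemma curv_bound (T : CurvTensor (EuclideanSpace ℝ (Fin n)))
    (x y : EuclideanSpace ℝ (Fin n)) (hx : ‖x‖ ≤ 1) (hy : ‖y‖ ≤ 1) :
    |T.R x y y x| ≤ ∑ i, ∑ j, ∑ k, ∑ l,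
      |T.R (EuclideanSpace.single i (1:ℝ)) (EuclideanSpace.single j 1)
        (EuclideanSpace.single k 1) (EuclideanSpace.single l 1)| := by
  set e : Fin n → EuclideanSpace ℝ (Fin n) := fun i => EuclideanSpace.single i (1:ℝ) with he
  have habs : ∀ (a : EuclideanSpace ℝ (Fin n)), ‖a‖ ≤ 1 → ∀ (g : Fin n → ℝ),
      |∑ i, a i * g i| ≤ ∑ i, |g i| := by
    intro a ha g
    calc |∑ i, a i * g i| ≤ ∑ i, |a i * g i| := Finset.abs_sum_le_sum_abs _ _
      _ ≤ ∑ i, |g i| := Finset.sum_le_sum fun i _ => by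
          rw [abs_mul]
          exact mul_le_of_le_one_left (abs_nonneg _) ((eucl_coord a i).trans ha)
  have h1 : ∀ x' y' z' w' : EuclideanSpace ℝ (Fin n),
      T.R x' y' z' w' = ∑ i, x' i * T.R (e i) y' z' w' := by
    intro x' y' z' w'
    conv_lhs => rw [eucl_repr x']
    rw [T.sum_left]
    exact Finset.sum_congr rfl fun i _ => T.smul_left _ _ _ _ _
  have h2 : ∀ x' y' z' w' : EuclideanSpace ℝ (Fin n),
      T.R x' y' z' w' = ∑ i, y' i * T.R x' (e i) z' w' := by
    intro x' y' z' w'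
    conv_lhs => rw [eucl_repr y']
    rw [T.sum_snd]
    exact Finset.sum_congr rfl fun i _ => T.smul_snd _ _ _ _ _
  have h3 : ∀ x' y' z' w' : EuclideanSpace ℝ (Fin n),
      T.R x' y' z' w' = ∑ i, z' i * T.R x' y' (e i) w' := by
    intro x' y' z' w'
    conv_lhs => rw [eucl_repr z']
    rw [T.sum_thd]
    exact Finset.sum_congr rfl fun i _ => T.smul_thd _ _ _ _ _
  have h4 : ∀ x' y' z' w' : EuclideanSpace ℝ (Fin n),
      T.R x' y' z' w' = ∑ i, w' i * T.R x' y' z' (e i) := by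
    intro x' y' z' w'
    conv_lhs => rw [eucl_repr w']
    rw [T.sum_fth]
    exact Finset.sum_congr rfl fun i _ => T.smul_fth _ _ _ _ _
  calc |T.R x y y x|
      ≤ ∑ i, |T.R (e i) y y x| := by rw [h1 x y y x]; exact habs x hx _
    _ ≤ ∑ i, ∑ j, |T.R (e i) (e j) y x| := Finset.sum_le_sum fun i _ => by
        rw [h2 (e i) y y x]; exact habs y hy _
    _ ≤ ∑ i, ∑ j, ∑ k, |T.R (e i) (e j) (e k) x| := Finset.sum_le_sum fun i _ =>
        Finset.sum_le_sum fun j _ => by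
          rw [h3 (e i) (e j) y x]; exact habs y hy _
    _ ≤ ∑ i, ∑ j, ∑ k, ∑ l, |T.R (e i) (e j) (e k) (e l)| := Finset.sum_le_sum fun i _ =>
        Finset.sum_le_sum fun j _ => Finset.sum_le_sum fun k _ => by
          rw [h4 (e i) (e j) (e k) x]; exact habs x hx _

end Euclid

/-- `R(u,v,v,u) = R(u-v,v,v,u-v)`; moreover for distinct `u, v` in the closed unit ball,
`R(u,v,v,u)/|u-v| ≤ 2·sup { |R(x,y,y,x)| : (x,y) orthonormal }`. -/
theorem curv_diagonal_bound (n : ℕ) (hn : 2 ≤ n)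
    (T : CurvTensor (EuclideanSpace ℝ (Fin n)))
    (u v : EuclideanSpace ℝ (Fin n)) :
    T.R u v v u = T.R (u - v) v v (u - v) ∧
      (‖u‖ ≤ 1 → ‖v‖ ≤ 1 → u ≠ v →
        T.R u v v u / ‖u - v‖ ≤
          2 * sSup {r : ℝ | ∃ x y : EuclideanSpace ℝ (Fin n),
            ⟪x, y⟫_ℝ = 0 ∧ ‖x‖ = 1 ∧ ‖y‖ = 1 ∧ r = |T.R x y y x|}) := by
  obtain ⟨m, rfl⟩ : ∃ m, n = m + 2 := ⟨n - 2, by omega⟩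
  set S := {r : ℝ | ∃ x y : EuclideanSpace ℝ (Fin (m+2)),
      ⟪x, y⟫_ℝ = 0 ∧ ‖x‖ = 1 ∧ ‖y‖ = 1 ∧ r = |T.R x y y x|} with hS
  -- Part 1
  have part1 : T.R u v v u = T.R (u - v) v v (u - v) := by
    rw [T.sub_left, T.sub_fth, T.sub_fth, T.diag_fst, T.diag_snd, T.diag_snd]
    ring
  refine ⟨part1, fun hu hv huv => ?_⟩
  -- S is bounded above and nonempty, elements nonneg
  have hbdd : BddAbove S := by
    refine ⟨∑ i, ∑ j, ∑ k, ∑ l,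
      |T.R (EuclideanSpace.single i (1:ℝ)) (EuclideanSpace.single j 1)
        (EuclideanSpace.single k 1) (EuclideanSpace.single l 1)|, ?_⟩
    rintro r ⟨x, y, -, hx, hy, rfl⟩
    exact curv_bound T x y hx.le hy.le
  have hne : S.Nonempty := by
    refine ⟨|T.R (EuclideanSpace.single 0 (1:ℝ)) (EuclideanSpace.single 1 1)
        (EuclideanSpace.single 1 1) (EuclideanSpace.single 0 1)|,
      EuclideanSpace.single 0 1, EuclideanSpace.single 1 1, ?_, ?_, ?_, rfl⟩
    · have h01 : (0 : Fin (m+2)) ≠ 1 := Fin.ne_of_val_ne (by simp)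
      simp [EuclideanSpace.inner_single_left, EuclideanSpace.single_apply, h01.symm]
    · simp
    · simp
  have hM0 : 0 ≤ sSup S := by
    obtain ⟨r, hrS⟩ := hne
    have hrS' := hrS
    obtain ⟨x, y, -, -, -, hr'⟩ := hrS
    calc (0:ℝ) ≤ r := hr' ▸ abs_nonneg _
      _ ≤ sSup S := le_csSup hbdd hrS'
  -- set up orthogonal decomposition
  set w := u - v with hwdef
  have hw : w ≠ 0 := sub_ne_zero.mpr huv
  have hw0 : (0:ℝ) < ‖w‖ := norm_pos_iff.mpr hw
  set α : ℝ := ⟪w, v⟫_ℝ / ‖w‖^2 with hα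
  set b := v - α • w with hb
  have hvb : v = b + α • w := by rw [hb]; abel
  have horth : ⟪w, b⟫_ℝ = 0 := by
    have h0 : ‖w‖ ≠ 0 := ne_of_gt hw0
    rw [hb, inner_sub_right, real_inner_smul_right, real_inner_self_eq_norm_sq, hα]
    field_simp
    ring
  have hRb : T.R u v v u = T.R w b b w := by
    rw [part1]
    calc T.R w v v w = T.R w (b + α • w) (b + α • w) w := by rw [← hvb]
      _ = T.R w b b w := T.diag_move w b α
  have hbnorm : ‖b‖ ≤ 1 := by
    have ho : ⟪b, α • w⟫_ℝ = 0 := by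
      rw [real_inner_smul_right, real_inner_comm, horth]; ring
    have h := norm_add_sq_real b (α • w)
    rw [ho, ← hvb] at h
    nlinarith [norm_nonneg b, norm_nonneg v, norm_nonneg (α • w)]
  have hw2 : ‖w‖ ≤ 2 := by
    calc ‖w‖ ≤ ‖u‖ + ‖v‖ := norm_sub_le u v
      _ ≤ 2 := by linarith
  by_cases hb0 : b = 0
  · rw [hRb, hb0]
    rw [show T.R w (0:EuclideanSpace ℝ (Fin (m+2))) 0 w = 0 from T.zero_snd w 0 w, zero_div]
    linarith
  · set x := ‖w‖⁻¹ • w with hx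
    set y := ‖b‖⁻¹ • b with hy
    have hb0' : (0:ℝ) < ‖b‖ := norm_pos_iff.mpr hb0
    have hxn : ‖x‖ = 1 := norm_smul_inv_norm hw
    have hyn : ‖y‖ = 1 := norm_smul_inv_norm hb0
    have hxy : ⟪x, y⟫_ℝ = 0 := by
      rw [hx, hy, real_inner_smul_left, real_inner_smul_right, horth]; ring
    have hmem : |T.R x y y x| ∈ S := ⟨x, y, hxy, hxn, hyn, rfl⟩
    have hle : T.R x y y x ≤ sSup S := (le_abs_self _).trans (le_csSup hbdd hmem)
    have hwx : w = ‖w‖ • x := (smul_inv_smul₀ (ne_of_gt hw0) w).symm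
    have hby : b = ‖b‖ • y := (smul_inv_smul₀ (ne_of_gt hb0') b).symm
    have hscale : T.R w b b w = ‖w‖^2 * ‖b‖^2 * T.R x y y x := by
      conv_lhs => rw [hwx, hby]
      rw [T.smul_left, T.smul_snd, T.smul_thd, T.smul_fth]; ring
    rw [hRb, hscale, div_le_iff₀ hw0]
    calc ‖w‖^2 * ‖b‖^2 * T.R x y y x
        ≤ ‖w‖^2 * ‖b‖^2 * sSup S :=
          mul_le_mul_of_nonneg_left hle (by positivity)
      _ ≤ 2 * sSup S * ‖w‖ := by
          nlinarith [hM0, hw2, hbnorm, hw0.le, hb0'.le,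
            mul_nonneg (mul_nonneg hw0.le (sub_nonneg.mpr hw2)) hM0,
            mul_nonneg (mul_nonneg (mul_nonneg hw0.le hw0.le) hM0)
              (sub_nonneg.mpr (mul_le_one₀ hbnorm (norm_nonneg b) hbnorm))]
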